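/- Let Δ be an oriented n-dimensional pseudomanifold on d vertices. Then J_Δ = L_Δ = I_𝒜; in particular, J_Δ is a prime toric ideal, and the saturation of the binomial ideal J(Δ) at the product of the x-variables is the defining ideal of the Rees algebra of the Stanley–Reisner ideal of the Alexander dual of Δ. -/

import Mathlib

open Finset

/-- The Koszul/simplicial sign of the vertex `i` inside the subset `s`: `(−1)^p` where
`p` is the number of elements of `s` strictly smaller than `i`. -/
def simpSgn {d : ℕ} (s : Finset (Fin d)) (i : Fin d) : ℤ := (-1) ^ (s.filter (· < i)).card

/-- An oriented pseudomanifold of dimension `n` on the `d` vertices `{0,…,d−1}`: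
a collection of facets, each an `(n+1)`-element subset of the vertices, equipped with
orientations (recorded, relative to the standard orientation coming from the ordering
of the vertices, by a sign `sgn σ = ±1`), such that every `n`-element subset of the
vertices lies in exactly zero or two facets, in the latter case the induced
orientations cancelling, and whose dual graph (a vertex for each facet, an edge when
two facets share an `n`-element subset) is connected. -/
structure OrientedPseudomanifold (n d : ℕ) where
  facets : Finset (Finset (Fin d))
  card_eq : ∀ σ ∈ facets, σ.card = n + 1
  sgn : Finset (Fin d) → ℤ
  sgn_pm : ∀ σ ∈ facets, sgn σ = 1 ∨ sgn σ = -1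
  ridge : ∀ t : Finset (Fin d), t.card = n →
    (facets.filter (fun σ => t ⊆ σ)).card = 0 ∨ (facets.filter (fun σ => t ⊆ σ)).card = 2
  cancel : ∀ t : Finset (Fin d), t.card = n →
    ∑ σ ∈ facets.filter (fun σ => t ⊆ σ), sgn σ * ∑ i ∈ σ \ t, simpSgn σ i = 0
  connected : (SimpleGraph.fromRel (fun (σ τ : {x // x ∈ facets}) =>
    ((σ : Finset (Fin d)) ∩ (τ : Finset (Fin d))).card = n)).Connected



open MvPolynomial

noncomputable section

variable {n d : ℕ} (k : Type*) [Field k] (Δ : OrientedPseudomanifold n d)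

/-- The variables of the ring `S = k[x₁,…,x_d, y_σ (σ ∈ Δ_n)]`. -/
abbrev PMVars (Δ : OrientedPseudomanifold n d) : Type := Fin d ⊕ {x // x ∈ Δ.facets}

/-- The multidegree (weight) of a variable: `deg x_i = e_i`,
`deg y_σ = wt(σ) = e_0 − Σ_{j∈σ} e_j`, in `ℤ^{d+1}` (coordinate `0` is `e_0`, and
coordinate `i.succ` is `e_i`). -/
def wtv : PMVars Δ → (Fin (d + 1) →₀ ℤ) :=
  Sum.elim (fun i => Finsupp.single i.succ 1)
    (fun σ => Finsupp.single 0 1 - ∑ j ∈ (σ : Finset (Fin d)), Finsupp.single j.succ 1)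

/-- `e₀ ∈ ℤ^{d+1}`. -/
def e0 (d : ℕ) : Fin (d + 1) →₀ ℤ := Finsupp.single 0 1

/-- The toric ideal `I_𝒜 ⊆ S` of the point configuration
`𝒜 = {e_1,…,e_d} ∪ {wt(σ) : σ ∈ Δ_n}`: the kernel of the `k`-algebra map to the
Laurent polynomial ring sending each variable to the monomial with exponent its
weight. -/
def toricIdealPM : Ideal (MvPolynomial (PMVars Δ) k) :=
  RingHom.ker (MvPolynomial.aeval (fun v =>
    (AddMonoidAlgebra.single (wtv Δ v) 1 : AddMonoidAlgebra k (Fin (d + 1) →₀ ℤ)))).toRingHom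

/-- The binomial ideal `J(Δ)`, generated by the binomials `x_i y_σ − x_j y_τ` over all
pairs of facets `σ, τ` and vertices `i ∈ σ`, `j ∈ τ` with `σ∖{i} = τ∖{j}`. -/
def JofPM : Ideal (MvPolynomial (PMVars Δ) k) :=
  Ideal.span {p | ∃ (σ τ : {x // x ∈ Δ.facets}) (i j : Fin d),
    i ∈ (σ : Finset (Fin d)) ∧ j ∈ (τ : Finset (Fin d)) ∧
    (σ : Finset (Fin d)).erase i = (τ : Finset (Fin d)).erase j ∧
    p = X (Sum.inl i) * X (Sum.inr σ) - X (Sum.inl j) * X (Sum.inr τ)}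

/-- The product of the `x`-variables. -/
def xProd : MvPolynomial (PMVars Δ) k := ∏ i : Fin d, X (Sum.inl i)

/-- `J_Δ = J(Δ) : (x₁⋯x_d)^∞`, the saturation of `J(Δ)` at the product of the
`x`-variables. -/
def JsatPM : Ideal (MvPolynomial (PMVars Δ) k) :=
  ⨆ m : ℕ, Submodule.colon (JofPM k Δ) (Ideal.span {xProd k Δ ^ m})

/-- The defining ideal `L_Δ` of the Rees algebra of the Stanley–Reisner ideal of the
Alexander dual of `Δ`: the kernel of the map `S → k[x₁,…,x_d,t]`, `x_i ↦ x_i`,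
`y_σ ↦ t·∏_{i∉σ} x_i` (the extra variable `t` is `X none`). -/
def LofPM : Ideal (MvPolynomial (PMVars Δ) k) :=
  RingHom.ker (MvPolynomial.aeval (Sum.elim
    (fun i => (X (some i) : MvPolynomial (Option (Fin d)) k))
    (fun (σ : {x // x ∈ Δ.facets}) => X none * ∏ i ∈ (σ : Finset (Fin d))ᶜ, X (some i)))).toRingHom

/-- The faces of the simplicial complex `Δ_m(𝒜)` (for `m = e₀`), per Hochster's
formula: subsets `I` of the point configuration `𝒜` (indexed by the variables) with
`e₀ − Σ_{a ∈ I} a` in the affine semigroup `ℕ𝒜`. -/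
def facesDeltaE0 : Set (Finset (PMVars Δ)) :=
  {I | (e0 d - ∑ v ∈ I, wtv Δ v) ∈ AddSubmonoid.closure (Set.range (wtv Δ))}

/-- The faces of `Δ`, regarded as the simplicial complex generated by its facets. -/
def facesPM (Δ : OrientedPseudomanifold n d) : Set (Finset (Fin d)) :=
  {t | ∃ σ ∈ Δ.facets, t ⊆ σ}

/-- The geometric realization of an abstract simplicial complex with (finite) vertex
set `V` and face set `K`, as a subspace of `V → ℝ`. -/
def realization (V : Type*) [Fintype V] (K : Set (Finset V)) : Set (V → ℝ) :=
  {f | (∀ v, 0 ≤ f v) ∧ (∑ v, f v = 1) ∧ ∃ s ∈ K, ∀ v, f v ≠ 0 → v ∈ s}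

end



/-!
STATEMENT 11: for an oriented `n`-dimensional pseudomanifold `Δ` on `d` vertices,
`J_Δ = L_Δ = I_𝒜`; in particular `J_Δ` is a prime toric ideal, and the saturation of
the binomial ideal `J(Δ)` at the product of the `x`-variables is the defining ideal
of the Rees algebra of the Stanley–Reisner ideal of the Alexander dual of `Δ`.
-/

/-- A (semigroup, toric) ideal: the kernel of a `k`-algebra homomorphism from the
polynomial ring to a Laurent polynomial ring sending each variable to a monomial. -/
def IsToricIdeal {k : Type*} [Field k] {σv : Type*} (I : Ideal (MvPolynomial σv k)) : Prop :=
  ∃ (p : ℕ) (m : σv → (Fin p →₀ ℤ)),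
    I = RingHom.ker (MvPolynomial.aeval
      (fun i => (AddMonoidAlgebra.single (m i) 1 : AddMonoidAlgebra k (Fin p →₀ ℤ)))).toRingHom


/-! ### Auxiliary machinery -/

noncomputable section AuxPM

open MvPolynomial

variable {n d : ℕ} (k : Type*) [Field k] (Δ : OrientedPseudomanifold n d)

/-- Exponent vectors of the images of the variables under the Rees map. -/
def evL (Δ : OrientedPseudomanifold n d) : PMVars Δ → (Option (Fin d) →₀ ℕ) :=
  Sum.elim (fun i => Finsupp.single (some i) 1)
    (fun σ => Finsupp.single none 1 + ∑ i ∈ (σ : Finset (Fin d))ᶜ, Finsupp.single (some i) 1)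

/-- The exponent (weight) map on monomials for the Rees map. -/
def hmapPM (Δ : OrientedPseudomanifold n d) : (PMVars Δ →₀ ℕ) →+ (Option (Fin d) →₀ ℕ) :=
  (Finsupp.linearCombination ℕ (evL Δ)).toAddMonoidHom

/-- The Rees algebra map itself, as an `AlgHom`. -/
def LmapPM : MvPolynomial (PMVars Δ) k →ₐ[k] MvPolynomial (Option (Fin d)) k :=
  MvPolynomial.aeval (Sum.elim
    (fun i => (X (some i) : MvPolynomial (Option (Fin d)) k))
    (fun (σ : {x // x ∈ Δ.facets}) => X none * ∏ i ∈ (σ : Finset (Fin d))ᶜ, X (some i)))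

lemma LofPM_eq : LofPM k Δ = RingHom.ker (LmapPM k Δ).toRingHom := rfl

lemma prod_monomial {τ ι : Type*} (s : Finset ι) (g : ι → (τ →₀ ℕ)) :
    ∏ i ∈ s, (monomial (g i) (1:k)) = monomial (∑ i ∈ s, g i) 1 := by
  induction s using Finset.cons_induction with
  | empty => simp [monomial_zero']
  | cons a s ha ih => rw [Finset.prod_cons, ih, monomial_mul, one_mul, Finset.sum_cons]

lemma LmapPM_X (v : PMVars Δ) : LmapPM k Δ (X v) = monomial (evL Δ v) 1 := by
  cases v with
  | inl i =>
    simp only [LmapPM, aeval_X, Sum.elim_inl, evL]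
    rfl
  | inr σ =>
    simp only [LmapPM, aeval_X, Sum.elim_inr, evL]
    have h1 : ∏ i ∈ (σ : Finset (Fin d))ᶜ, (X (some i) : MvPolynomial (Option (Fin d)) k)
        = monomial (∑ i ∈ (σ : Finset (Fin d))ᶜ, Finsupp.single (some i) 1) 1 :=
      prod_monomial k _ _
    rw [h1, show (X none : MvPolynomial (Option (Fin d)) k)
        = monomial (Finsupp.single none 1) 1 from rfl, monomial_mul, one_mul]

lemma hmapPM_single (v : PMVars Δ) : hmapPM Δ (Finsupp.single v 1) = evL Δ v := by
  simp [hmapPM, Finsupp.linearCombination_single]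

lemma hmapPM_apply (f : PMVars Δ →₀ ℕ) :
    hmapPM Δ f = ∑ v ∈ f.support, f v • evL Δ v := by
  simp [hmapPM, Finsupp.linearCombination_apply, Finsupp.sum]

lemma LmapPM_monomial (f : PMVars Δ →₀ ℕ) :
    LmapPM k Δ (monomial f 1) = monomial (hmapPM Δ f) 1 := by
  rw [← prod_X_pow_eq_monomial, map_prod]
  rw [Finset.prod_congr rfl (fun v (_ : v ∈ f.support) => by
    rw [map_pow, LmapPM_X, monomial_pow, one_pow] :
    ∀ v ∈ f.support, LmapPM k Δ (X v ^ f v) = monomial (f v • evL Δ v) 1),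
    prod_monomial, hmapPM_apply]

lemma evL_inr_none (σ : {x // x ∈ Δ.facets}) : evL Δ (Sum.inr σ) none = 1 := by
  simp [evL, Finsupp.finset_sum_apply, Finsupp.single_apply]

lemma hmapPM_none (f : PMVars Δ →₀ ℕ) :
    hmapPM Δ f none = ∑ v ∈ f.support, f v * evL Δ v none := by
  rw [hmapPM_apply, Finsupp.finset_sum_apply]
  exact Finset.sum_congr rfl fun v _ => by rw [Finsupp.smul_apply, smul_eq_mul]

lemma hmapPM_some (f : PMVars Δ →₀ ℕ) (i : Fin d) :
    hmapPM Δ f (some i) = ∑ v ∈ f.support, f v * evL Δ v (some i) := by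
  rw [hmapPM_apply, Finsupp.finset_sum_apply]
  exact Finset.sum_congr rfl fun v _ => by rw [Finsupp.smul_apply, smul_eq_mul]

lemma yzero_of_none_zero (f : PMVars Δ →₀ ℕ) (h0 : hmapPM Δ f none = 0)
    (σ : {x // x ∈ Δ.facets}) : f (Sum.inr σ) = 0 := by
  by_contra hne
  have hmem : Sum.inr σ ∈ f.support := Finsupp.mem_support_iff.mpr hne
  rw [hmapPM_none, Finset.sum_eq_zero_iff] at h0
  have := h0 _ hmem
  rw [evL_inr_none, mul_one] at this
  exact hne this

lemma eq_of_hmap_eq_of_none_zero (f g : PMVars Δ →₀ ℕ)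
    (h : hmapPM Δ f = hmapPM Δ g) (h0 : hmapPM Δ f none = 0) : f = g := by
  have h0g : hmapPM Δ g none = 0 := by rw [← h]; exact h0
  have hfy := yzero_of_none_zero Δ f h0
  have hgy := yzero_of_none_zero Δ g h0g
  have hx : ∀ (u : PMVars Δ →₀ ℕ), (∀ σ, u (Sum.inr σ) = 0) →
      ∀ i : Fin d, hmapPM Δ u (some i) = u (Sum.inl i) := by
    intro u hu i
    rw [hmapPM_some]
    have : ∀ v ∈ u.support, u v * evL Δ v (some i)
        = if v = Sum.inl i then u v else 0 := by
      intro v hv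
      cases v with
      | inl l =>
        simp only [evL, Sum.elim_inl, Finsupp.single_apply]
        by_cases hli : l = i
        · subst hli; simp
        · simp [hli, (by simpa using hli : ¬ Sum.inl l = (Sum.inl i : PMVars Δ))]
      | inr σ =>
        exact absurd (hu σ) (Finsupp.mem_support_iff.mp hv)
    rw [Finset.sum_congr rfl this, Finset.sum_ite_eq' u.support (Sum.inl i) u]
    split
    · rfl
    · exact (Finsupp.notMem_support_iff.mp (by assumption)).symm
  ext v
  cases v with
  | inl i => rw [← hx f hfy i, ← hx g hgy i, h]
  | inr σ => rw [hfy, hgy]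

/-- The set of "equal weight" binomials. -/
def binomSet : Set (MvPolynomial (PMVars Δ) k) :=
  {q | ∃ f g : PMVars Δ →₀ ℕ, hmapPM Δ f = hmapPM Δ g ∧ q = monomial f 1 - monomial g 1}

lemma LmapPM_eq_sum (p : MvPolynomial (PMVars Δ) k) :
    LmapPM k Δ p = ∑ f ∈ p.support, coeff f p • monomial (hmapPM Δ f) 1 := by
  conv_lhs => rw [← support_sum_monomial_coeff p]
  rw [map_sum]
  refine Finset.sum_congr rfl fun f _ => ?_
  rw [show monomial f (coeff f p) = coeff f p • monomial f 1 by
      rw [smul_monomial, smul_eq_mul, mul_one],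
    map_smul, LmapPM_monomial]

lemma mem_span_binomials : ∀ (N : ℕ) (p : MvPolynomial (PMVars Δ) k),
    p.support.card ≤ N → LmapPM k Δ p = 0 →
    p ∈ Submodule.span k (binomSet k Δ) := by
  intro N
  induction N with
  | zero =>
    intro p hc _
    have : p = 0 := by
      rw [← MvPolynomial.support_eq_empty]
      exact Finset.card_eq_zero.mp (Nat.le_zero.mp hc)
    rw [this]; exact Submodule.zero_mem _
  | succ N ih =>
    intro p hc hker
    by_cases hp0 : p = 0
    · rw [hp0]; exact Submodule.zero_mem _
    obtain ⟨f0, hf0⟩ := MvPolynomial.support_nonempty.mpr hp0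
    classical
    set F := p.support.filter (fun f => hmapPM Δ f = hmapPM Δ f0) with hF
    have hf0F : f0 ∈ F := Finset.mem_filter.mpr ⟨hf0, rfl⟩
    have key : ∑ f ∈ F, coeff f p = 0 := by
      have hc0 : coeff (hmapPM Δ f0) (LmapPM k Δ p) = 0 := by rw [hker]; simp
      rw [LmapPM_eq_sum, coeff_sum] at hc0
      have he : ∀ f ∈ p.support, coeff (hmapPM Δ f0) (coeff f p • monomial (hmapPM Δ f) 1)
          = if hmapPM Δ f = hmapPM Δ f0 then coeff f p else 0 := by
        intro f _
        rw [coeff_smul, coeff_monomial, smul_eq_mul]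
        split <;> simp
      rw [Finset.sum_congr rfl he] at hc0
      rw [hF, Finset.sum_filter]
      exact hc0
    set q := ∑ f ∈ F, coeff f p • (monomial f 1 - monomial f0 1 : MvPolynomial (PMVars Δ) k) with hq
    have hqmem : q ∈ Submodule.span k (binomSet k Δ) := by
      refine Submodule.sum_mem _ fun f hf => Submodule.smul_mem _ _ (Submodule.subset_span ?_)
      exact ⟨f, f0, (Finset.mem_filter.mp hf).2, rfl⟩
    have hcoeffq : ∀ f, coeff f q = if f ∈ F then coeff f p else 0 := by
      intro f
      rw [hq, coeff_sum]
      have : ∀ g ∈ F, coeff f (coeff g p • (monomial g 1 - monomial f0 1 : MvPolynomial (PMVars Δ) k))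
          = (if g = f then coeff g p else 0) - (if f0 = f then coeff g p else 0) := by
        intro g _
        rw [coeff_smul, coeff_sub, coeff_monomial, coeff_monomial, smul_eq_mul, mul_sub]
        congr 1 <;> split <;> simp
      rw [Finset.sum_congr rfl this, Finset.sum_sub_distrib,
        Finset.sum_ite_eq' F f (fun g => coeff g p)]
      have h2 : (∑ g ∈ F, if f0 = f then coeff g p else 0) = 0 := by
        by_cases hf0f : f0 = f
        · simp only [hf0f, if_true]; exact key
        · simp [hf0f]
      rw [h2, sub_zero]
    have hsupp : (p - q).support ⊆ p.support \ F := by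
      intro f hf
      rw [MvPolynomial.mem_support_iff] at hf
      rw [coeff_sub, hcoeffq] at hf
      by_cases hfF : f ∈ F
      · rw [if_pos hfF, sub_self] at hf; exact absurd rfl hf
      · rw [if_neg hfF, sub_zero] at hf
        exact Finset.mem_sdiff.mpr ⟨MvPolynomial.mem_support_iff.mpr hf, hfF⟩
    have hcard : (p - q).support.card ≤ N := by
      have h1 : (p - q).support.card ≤ (p.support \ F).card := Finset.card_le_card hsupp
      have h2 : (p.support \ F).card = p.support.card - F.card :=
        Finset.card_sdiff_of_subset (Finset.filter_subset _ _)
      have h3 : 1 ≤ F.card := Finset.card_pos.mpr ⟨f0, hf0F⟩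
      omega
    have hkerq : LmapPM k Δ (p - q) = 0 := by
      rw [map_sub, hker, zero_sub, neg_eq_zero, hq, map_sum]
      refine Finset.sum_eq_zero fun f hf => ?_
      rw [map_smul, map_sub, LmapPM_monomial, LmapPM_monomial,
        (Finset.mem_filter.mp hf).2, sub_self, smul_zero]
    have := ih (p - q) hcard hkerq
    have : p = (p - q) + q := by ring
    rw [this]
    exact Submodule.add_mem _ (ih (p - q) hcard hkerq) hqmem

lemma monomial_mul_monomial' {τ : Type*} (a b : τ →₀ ℕ) :
    monomial a (1:k) * monomial b 1 = monomial (a + b) 1 := by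
  rw [monomial_mul, one_mul]

lemma monomial_mul_X {τ : Type*} (a : τ →₀ ℕ) (v : τ) :
    monomial a (1:k) * X v = monomial (a + Finsupp.single v 1) 1 := by
  rw [show (X v : MvPolynomial τ k) = monomial (Finsupp.single v 1) 1 from rfl,
    monomial_mul, one_mul]

lemma evL_ridge {σ τ : {x // x ∈ Δ.facets}} {i j : Fin d}
    (hi : i ∈ (σ : Finset (Fin d))) (hj : j ∈ (τ : Finset (Fin d)))
    (he : (σ : Finset (Fin d)).erase i = (τ : Finset (Fin d)).erase j) :
    evL Δ (Sum.inl i) + evL Δ (Sum.inr σ) = evL Δ (Sum.inl j) + evL Δ (Sum.inr τ) := by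
  have key : ∀ (s : Finset (Fin d)) (a : Fin d), a ∈ s →
      Finsupp.single (some a) (1:ℕ) + ∑ l ∈ sᶜ, Finsupp.single (some l) 1
      = ∑ l ∈ (s.erase a)ᶜ, Finsupp.single (some l) 1 := by
    intro s a ha
    rw [Finset.compl_erase, Finset.sum_insert (by simpa using ha)]
  simp only [evL, Sum.elim_inl, Sum.elim_inr]
  rw [add_left_comm, key _ _ hi, add_left_comm, key _ _ hj, he]

lemma JofPM_le_ker : JofPM k Δ ≤ RingHom.ker (LmapPM k Δ).toRingHom := by
  rw [JofPM, Ideal.span_le]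
  rintro p ⟨σ, τ, i, j, hi, hj, he, rfl⟩
  rw [SetLike.mem_coe, RingHom.mem_ker]
  show LmapPM k Δ _ = 0
  rw [map_sub, map_mul, map_mul, LmapPM_X, LmapPM_X, LmapPM_X, LmapPM_X,
    monomial_mul_monomial', monomial_mul_monomial', sub_eq_zero, evL_ridge Δ hi hj he]

/-- A monomial exponent supported only on `x`-variables. -/
def xonly (a : PMVars Δ →₀ ℕ) : Prop := ∀ σ : {x // x ∈ Δ.facets}, a (Sum.inr σ) = 0

lemma xonly_none {a : PMVars Δ →₀ ℕ} (ha : xonly Δ a) : hmapPM Δ a none = 0 := by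
  rw [hmapPM_none]
  refine Finset.sum_eq_zero fun v hv => ?_
  cases v with
  | inl l => simp [evL]
  | inr σ => exact absurd (ha σ) (Finsupp.mem_support_iff.mp hv)

lemma exists_y {f : PMVars Δ →₀ ℕ} (h : hmapPM Δ f none ≠ 0) :
    ∃ σ, f (Sum.inr σ) ≠ 0 := by
  by_contra hall
  push_neg at hall
  exact h (xonly_none Δ hall)

lemma adj_gen {σ τ : {x // x ∈ Δ.facets}} (hne : σ ≠ τ)
    (hcard : ((σ : Finset (Fin d)) ∩ (τ : Finset (Fin d))).card = n) :
    ∃ i j : Fin d, i ∈ (σ : Finset (Fin d)) ∧ j ∈ (τ : Finset (Fin d)) ∧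
      (σ : Finset (Fin d)).erase i = (τ : Finset (Fin d)).erase j := by
  have hσ : (σ : Finset (Fin d)).card = n + 1 := Δ.card_eq _ σ.2
  have hτ : (τ : Finset (Fin d)).card = n + 1 := Δ.card_eq _ τ.2
  have h1 : ((σ : Finset (Fin d)) \ (τ : Finset (Fin d))).card = 1 := by
    have := Finset.card_inter_add_card_sdiff (σ : Finset (Fin d)) (τ : Finset (Fin d))
    omega
  have h2 : ((τ : Finset (Fin d)) \ (σ : Finset (Fin d))).card = 1 := by
    have := Finset.card_inter_add_card_sdiff (τ : Finset (Fin d)) (σ : Finset (Fin d))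
    rw [Finset.inter_comm] at this
    omega
  obtain ⟨i, hi⟩ := Finset.card_eq_one.mp h1
  obtain ⟨j, hj⟩ := Finset.card_eq_one.mp h2
  refine ⟨i, j, ?_, ?_, ?_⟩
  · have : i ∈ (σ : Finset (Fin d)) \ (τ : Finset (Fin d)) := by
      rw [hi]; exact Finset.mem_singleton_self i
    exact (Finset.mem_sdiff.mp this).1
  · have : j ∈ (τ : Finset (Fin d)) \ (σ : Finset (Fin d)) := by
      rw [hj]; exact Finset.mem_singleton_self j
    exact (Finset.mem_sdiff.mp this).1
  · rw [Finset.erase_eq, Finset.erase_eq, ← hi, ← hj,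
      Finset.sdiff_sdiff_self_left, Finset.sdiff_sdiff_self_left, Finset.inter_comm]

lemma chainJ (σ τ : {x // x ∈ Δ.facets}) :
    ∃ a b : PMVars Δ →₀ ℕ, xonly Δ a ∧ xonly Δ b ∧
      (monomial a 1 * X (Sum.inr σ) - monomial b 1 * X (Sum.inr τ) :
        MvPolynomial (PMVars Δ) k) ∈ JofPM k Δ := by
  obtain ⟨w⟩ := Δ.connected.preconnected σ τ
  induction w with
  | nil =>
    exact ⟨0, 0, fun _ => rfl, fun _ => rfl, by rw [sub_self]; exact Ideal.zero_mem _⟩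
  | @cons u v x h p ih =>
    rw [SimpleGraph.fromRel_adj] at h
    obtain ⟨hne, hcard⟩ := h
    have hcard' : ((u : Finset (Fin d)) ∩ (v : Finset (Fin d))).card = n := by
      rcases hcard with h | h
      · exact h
      · rw [Finset.inter_comm]; exact h
    obtain ⟨i, j, hi, hj, he⟩ := adj_gen Δ hne hcard'
    obtain ⟨a', b', ha', hb', hJ'⟩ := ih
    have hgen : (X (Sum.inl i) * X (Sum.inr u) - X (Sum.inl j) * X (Sum.inr v) :
        MvPolynomial (PMVars Δ) k) ∈ JofPM k Δ :=
      Ideal.subset_span ⟨u, v, i, j, hi, hj, he, rfl⟩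
    refine ⟨a' + Finsupp.single (Sum.inl i) 1, b' + Finsupp.single (Sum.inl j) 1,
      ?_, ?_, ?_⟩
    · intro ρ
      rw [Finsupp.add_apply, ha' ρ, Finsupp.single_apply, if_neg (by simp), add_zero]
    · intro ρ
      rw [Finsupp.add_apply, hb' ρ, Finsupp.single_apply, if_neg (by simp), add_zero]
    · rw [← monomial_mul_X, ← monomial_mul_X]
      have hr : monomial a' (1:k) * X (Sum.inl i) * X (Sum.inr u)
          - monomial b' 1 * X (Sum.inl j) * X (Sum.inr x)
          = monomial a' 1 * (X (Sum.inl i) * X (Sum.inr u) - X (Sum.inl j) * X (Sum.inr v))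
            + X (Sum.inl j) * (monomial a' 1 * X (Sum.inr v) - monomial b' 1 * X (Sum.inr x)) := by
        ring
      rw [hr]
      exact Ideal.add_mem _ (Ideal.mul_mem_left _ _ hgen) (Ideal.mul_mem_left _ _ hJ')

lemma xonly_pow {a : PMVars Δ →₀ ℕ} (ha : xonly Δ a) :
    ∃ (N : ℕ) (w : PMVars Δ →₀ ℕ),
      monomial a (1:k) * monomial w 1 = xProd k Δ ^ N := by
  have hxprod : xProd k Δ = monomial (∑ i : Fin d, Finsupp.single (Sum.inl i) 1) 1 :=
    prod_monomial k _ _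
  set cst : PMVars Δ →₀ ℕ := ∑ i : Fin d, Finsupp.single (Sum.inl i) 1 with hcst
  set N : ℕ := ∑ v ∈ a.support, a v with hN
  have hle : a ≤ N • cst := by
    rw [Finsupp.le_def]
    intro v
    have hv1 : a v ≤ N := by
      by_cases hv : v ∈ a.support
      · exact Finset.single_le_sum (fun _ _ => Nat.zero_le _) hv
      · rw [Finsupp.notMem_support_iff.mp hv]; exact Nat.zero_le _
    have hcv : cst v = if ∃ i, v = Sum.inl i then 1 else 0 := by
      rw [hcst, Finsupp.finset_sum_apply]
      cases v with
      | inl l => simp [Finsupp.single_apply]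
      | inr ρ => simp [Finsupp.single_apply]
    rw [Finsupp.smul_apply, hcv]
    cases v with
    | inl l => simpa using hv1
    | inr ρ => simp [ha ρ]
  refine ⟨N, N • cst - a, ?_⟩
  rw [monomial_mul_monomial', add_tsub_cancel_of_le hle, hxprod, monomial_pow, one_pow]

lemma key_binomial : ∀ (m : ℕ) (f g : PMVars Δ →₀ ℕ),
    hmapPM Δ f none = m → hmapPM Δ f = hmapPM Δ g →
    ∃ N : ℕ, xProd k Δ ^ N * (monomial f 1 - monomial g 1) ∈ JofPM k Δ := by
  intro m
  induction m with
  | zero =>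
    intro f g h0 heq
    rw [eq_of_hmap_eq_of_none_zero Δ f g heq h0, sub_self]
    exact ⟨0, by rw [mul_zero]; exact Ideal.zero_mem _⟩
  | succ m ih =>
    intro f g h0 heq
    obtain ⟨σ, hσ⟩ := exists_y Δ (f := f) (by omega)
    obtain ⟨τ, hτ⟩ := exists_y Δ (f := g) (by rw [← heq]; omega)
    set f' := f - Finsupp.single (Sum.inr σ) 1 with hf'
    set g' := g - Finsupp.single (Sum.inr τ) 1 with hg'
    have hfd : f' + Finsupp.single (Sum.inr σ) 1 = f := by
      ext v
      rcases eq_or_ne v (Sum.inr σ) with rfl | hv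
      · rw [Finsupp.add_apply, hf', Finsupp.tsub_apply, Finsupp.single_eq_same]
        omega
      · rw [Finsupp.add_apply, hf', Finsupp.tsub_apply,
          Finsupp.single_apply, if_neg (fun hh => hv hh.symm)]
        omega
    have hgd : g' + Finsupp.single (Sum.inr τ) 1 = g := by
      ext v
      rcases eq_or_ne v (Sum.inr τ) with rfl | hv
      · rw [Finsupp.add_apply, hg', Finsupp.tsub_apply, Finsupp.single_eq_same]
        omega
      · rw [Finsupp.add_apply, hg', Finsupp.tsub_apply,
          Finsupp.single_apply, if_neg (fun hh => hv hh.symm)]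
        omega
    obtain ⟨a, b, ha, hb, hab⟩ := chainJ k Δ σ τ
    -- weight identity from hab
    have hA : hmapPM Δ a + evL Δ (Sum.inr σ) = hmapPM Δ b + evL Δ (Sum.inr τ) := by
      have h1 := JofPM_le_ker k Δ hab
      rw [RingHom.mem_ker] at h1
      have h2 : LmapPM k Δ (monomial a 1 * X (Sum.inr σ))
          = LmapPM k Δ (monomial b 1 * X (Sum.inr τ)) := by
        have h1' : LmapPM k Δ (monomial a 1 * X (Sum.inr σ) - monomial b 1 * X (Sum.inr τ)) = 0 := h1
        rw [map_sub] at h1'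
        exact sub_eq_zero.mp h1' 
      rw [monomial_mul_X, monomial_mul_X, LmapPM_monomial, LmapPM_monomial] at h2
      have h3 := (monomial_eq_monomial_iff _ _ _ _).mp h2
      rcases h3 with ⟨h3, -⟩ | ⟨h3, -⟩
      · rw [map_add, map_add, hmapPM_single, hmapPM_single] at h3
        exact h3
      · exact absurd h3 one_ne_zero
    have hB : hmapPM Δ f' + evL Δ (Sum.inr σ) = hmapPM Δ g' + evL Δ (Sum.inr τ) := by
      rw [← hmapPM_single Δ (Sum.inr σ), ← hmapPM_single Δ (Sum.inr τ), ← map_add, ← map_add,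
        hfd, hgd]
      exact heq
    have hC : hmapPM Δ (b + f') = hmapPM Δ (a + g') := by
      rw [map_add, map_add]
      have h2 : hmapPM Δ b + hmapPM Δ f' + (evL Δ (Sum.inr τ) + evL Δ (Sum.inr σ))
          = hmapPM Δ a + hmapPM Δ g' + (evL Δ (Sum.inr τ) + evL Δ (Sum.inr σ)) := by
        have e1 : hmapPM Δ b + hmapPM Δ f' + (evL Δ (Sum.inr τ) + evL Δ (Sum.inr σ))
            = (hmapPM Δ b + evL Δ (Sum.inr τ)) + (hmapPM Δ f' + evL Δ (Sum.inr σ)) := by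
          abel
        have e2 : hmapPM Δ a + hmapPM Δ g' + (evL Δ (Sum.inr τ) + evL Δ (Sum.inr σ))
            = (hmapPM Δ a + evL Δ (Sum.inr σ)) + (hmapPM Δ g' + evL Δ (Sum.inr τ)) := by
          abel
        rw [e1, e2, ← hA, hB]
      exact add_right_cancel h2
    have hdeg : hmapPM Δ (b + f') none = m := by
      have hf'none : hmapPM Δ f' none + 1 = m + 1 := by
        have := congrArg (fun u : Option (Fin d) →₀ ℕ => u none)
          (show hmapPM Δ f' + evL Δ (Sum.inr σ) = hmapPM Δ f from by
            rw [← hmapPM_single Δ (Sum.inr σ), ← map_add, hfd])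
        simp only [Finsupp.add_apply, evL_inr_none] at this
        rw [this, h0]
      rw [map_add, Finsupp.add_apply, xonly_none Δ hb]
      omega
    obtain ⟨N, hN⟩ := ih (b + f') (a + g') hdeg hC
    obtain ⟨Na, w, hw⟩ := xonly_pow k Δ ha
    refine ⟨N + Na, ?_⟩
    have hfm : (monomial f 1 : MvPolynomial (PMVars Δ) k)
        = monomial f' 1 * X (Sum.inr σ) := by rw [monomial_mul_X, hfd]
    have hgm : (monomial g 1 : MvPolynomial (PMVars Δ) k)
        = monomial g' 1 * X (Sum.inr τ) := by rw [monomial_mul_X, hgd]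
    have hE : xProd k Δ ^ (N + Na) * (monomial f 1 - monomial g 1 : MvPolynomial (PMVars Δ) k)
        = monomial w 1 * ((xProd k Δ ^ N * monomial f' 1)
            * (monomial a 1 * X (Sum.inr σ) - monomial b 1 * X (Sum.inr τ))
          + X (Sum.inr τ)
            * (xProd k Δ ^ N * (monomial (b + f') 1 - monomial (a + g') 1))) := by
      rw [pow_add, ← hw, hfm, hgm, ← monomial_mul_monomial' k b f', ← monomial_mul_monomial' k a g']
      ring
    rw [hE]
    exact Ideal.mul_mem_left _ _ (Ideal.add_mem _ (Ideal.mul_mem_left _ _ hab)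
      (Ideal.mul_mem_left _ _ hN))

/-! ### Toric side -/

/-- The target weights in `ℤ^{d+1}`. -/
def Wt (d : ℕ) : Option (Fin d) → (Fin (d + 1) →₀ ℤ)
  | none => Finsupp.single 0 1 - ∑ j : Fin d, Finsupp.single j.succ 1
  | some i => Finsupp.single i.succ 1

/-- The linear extension of `Wt` to exponent vectors. -/
def gT (d : ℕ) : (Option (Fin d) →₀ ℕ) →+ (Fin (d + 1) →₀ ℤ) :=
  (Finsupp.linearCombination ℕ (Wt d)).toAddMonoidHom

lemma gT_single (o : Option (Fin d)) : gT d (Finsupp.single o 1) = Wt d o := by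
  simp [gT, Finsupp.linearCombination_single]

lemma gT_apply (u : Option (Fin d) →₀ ℕ) (c : Fin (d + 1)) :
    gT d u c = ∑ o ∈ u.support, (u o : ℤ) * Wt d o c := by
  rw [gT, LinearMap.toAddMonoidHom_coe, Finsupp.linearCombination_apply, Finsupp.sum,
    Finsupp.finset_sum_apply]
  exact Finset.sum_congr rfl fun o _ => by
    rw [Finsupp.smul_apply, nsmul_eq_mul]

lemma Wt_zero (o : Option (Fin d)) : Wt d o 0 = if o = none then 1 else 0 := by
  cases o with
  | none =>
    simp only [Wt, Finsupp.sub_apply, Finsupp.single_eq_same, Finsupp.finset_sum_apply,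
      if_pos rfl]
    rw [Finset.sum_eq_zero fun j _ => Finsupp.single_eq_of_ne' (Fin.succ_ne_zero j)]
    norm_num
  | some i =>
    simp only [Wt]
    rw [Finsupp.single_eq_of_ne' (Fin.succ_ne_zero i)]
    simp

lemma Wt_succ (o : Option (Fin d)) (i : Fin d) :
    Wt d o i.succ = (if o = some i then 1 else 0) - (if o = none then 1 else 0) := by
  cases o with
  | none =>
    simp only [Wt, Finsupp.sub_apply, Finsupp.finset_sum_apply]
    rw [Finsupp.single_eq_of_ne' (Fin.succ_ne_zero i).symm]
    have : ∀ j : Fin d, Finsupp.single j.succ (1:ℤ) i.succ = if j = i then 1 else 0 := by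
      intro j
      rw [Finsupp.single_apply]
      congr 1
      simp [Fin.succ_inj]
    rw [Finset.sum_congr rfl fun j _ => this j, Finset.sum_ite_eq' Finset.univ i fun _ => (1:ℤ)]
    simp
  | some l =>
    simp only [Wt, Finsupp.single_apply]
    by_cases hli : l = i
    · subst hli; simp
    · rw [if_neg (by simpa [Fin.succ_inj] using hli), if_neg (by simpa using hli)]
      simp

lemma gT_zero_coord (u : Option (Fin d) →₀ ℕ) : gT d u 0 = (u none : ℤ) := by
  rw [gT_apply]
  have : ∀ o ∈ u.support, (u o : ℤ) * Wt d o 0 = if o = none then (u o : ℤ) else 0 := by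
    intro o _
    rw [Wt_zero]
    split <;> simp
  rw [Finset.sum_congr rfl this, Finset.sum_ite_eq' u.support none fun o => (u o : ℤ)]
  split
  · rfl
  · rw [Finsupp.notMem_support_iff.mp (by assumption)]; simp

lemma gT_succ_coord (u : Option (Fin d) →₀ ℕ) (i : Fin d) :
    gT d u i.succ = (u (some i) : ℤ) - (u none : ℤ) := by
  rw [gT_apply]
  have : ∀ o ∈ u.support, (u o : ℤ) * Wt d o i.succ
      = (if o = some i then (u o : ℤ) else 0) - (if o = none then (u o : ℤ) else 0) := by
    intro o _
    rw [Wt_succ, mul_sub]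
    congr 1 <;> split <;> simp
  rw [Finset.sum_congr rfl this, Finset.sum_sub_distrib,
    Finset.sum_ite_eq' u.support (some i) fun o => (u o : ℤ),
    Finset.sum_ite_eq' u.support none fun o => (u o : ℤ)]
  congr 1
  · split
    · rfl
    · rw [Finsupp.notMem_support_iff.mp (by assumption)]; simp
  · split
    · rfl
    · rw [Finsupp.notMem_support_iff.mp (by assumption)]; simp

lemma gT_injective : Function.Injective (gT d) := by
  intro u u' h
  have h0 : u none = u' none := by
    have := congrArg (fun w : Fin (d+1) →₀ ℤ => w 0) h
    simp only [gT_zero_coord] at this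
    exact_mod_cast this
  ext o
  cases o with
  | none => exact h0
  | some i =>
    have := congrArg (fun w : Fin (d+1) →₀ ℤ => w i.succ) h
    simp only [gT_succ_coord] at this
    rw [h0] at this
    have : (u (some i) : ℤ) = (u' (some i) : ℤ) := by omega
    exact_mod_cast this

/-- `ψ`: the ring embedding of the polynomial target into the Laurent target. -/
def psiPM (k : Type*) [Field k] (d : ℕ) :
    MvPolynomial (Option (Fin d)) k →ₐ[k] AddMonoidAlgebra k (Fin (d + 1) →₀ ℤ) :=
  AddMonoidAlgebra.mapDomainAlgHom k k (gT d)

lemma psiPM_monomial (e : Option (Fin d) →₀ ℕ) :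
    psiPM k d (monomial e (1:k)) = AddMonoidAlgebra.single (gT d e) 1 := by
  exact AddMonoidAlgebra.mapDomain_single

lemma psiPM_injective : Function.Injective (psiPM k d) := by
  rw [psiPM]
  intro p q h
  exact AddMonoidAlgebra.mapDomain_injective gT_injective h

lemma gT_evL (v : PMVars Δ) : gT d (evL Δ v) = wtv Δ v := by
  cases v with
  | inl i =>
    rw [show evL Δ (Sum.inl i) = Finsupp.single (some i) 1 from rfl, gT_single]
    rfl
  | inr σ =>
    rw [show evL Δ (Sum.inr σ) = Finsupp.single none 1
        + ∑ i ∈ (σ : Finset (Fin d))ᶜ, Finsupp.single (some i) 1 from rfl]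
    rw [map_add, map_sum, gT_single]
    rw [Finset.sum_congr rfl fun i (_ : i ∈ (σ : Finset (Fin d))ᶜ) => gT_single (some i)]
    show (Finsupp.single 0 1 - ∑ j : Fin d, Finsupp.single j.succ 1)
        + ∑ i ∈ (σ : Finset (Fin d))ᶜ, Finsupp.single i.succ 1
      = Finsupp.single 0 1 - ∑ j ∈ (σ : Finset (Fin d)), Finsupp.single j.succ 1
    rw [← Finset.sum_add_sum_compl (σ : Finset (Fin d)) (fun j => Finsupp.single j.succ (1:ℤ))]
    abel

lemma toric_eq_kerL : toricIdealPM k Δ = RingHom.ker (LmapPM k Δ).toRingHom := by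
  have hcomp : (MvPolynomial.aeval (fun v =>
      (AddMonoidAlgebra.single (wtv Δ v) 1 : AddMonoidAlgebra k (Fin (d + 1) →₀ ℤ))))
      = (psiPM k d).comp (LmapPM k Δ) := by
    apply MvPolynomial.algHom_ext
    intro v
    rw [aeval_X, AlgHom.comp_apply, LmapPM_X, psiPM_monomial, gT_evL]
  rw [toricIdealPM, hcomp]
  ext p
  simp only [RingHom.mem_ker]
  constructor
  · intro h
    have hA : psiPM k d (LmapPM k Δ p) = 0 := h
    have : LmapPM k Δ p = 0 := by
      apply psiPM_injective (d := d) (k := k)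
      rw [hA, map_zero]
    exact this
  · intro h
    show psiPM k d (LmapPM k Δ p) = 0
    rw [show LmapPM k Δ p = 0 from h, map_zero]

end AuxPM

theorem Jsat_eq_Rees_eq_toric {n d : ℕ} (k : Type*) [Field k]
    (Δ : OrientedPseudomanifold n d) :
    JsatPM k Δ = LofPM k Δ ∧ LofPM k Δ = toricIdealPM k Δ ∧
    (JsatPM k Δ).IsPrime ∧ IsToricIdeal (JsatPM k Δ) := by
  classical
  have hL : LofPM k Δ = RingHom.ker (LmapPM k Δ).toRingHom := LofPM_eq k Δ
  have hJle : JofPM k Δ ≤ LofPM k Δ := by rw [hL]; exact JofPM_le_ker k Δ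
  have hprime : (LofPM k Δ).IsPrime := by rw [hL]; exact RingHom.ker_isPrime _
  have hxne : ∀ m : ℕ, xProd k Δ ^ m ∉ LofPM k Δ := by
    intro m hmem
    rw [hL, RingHom.mem_ker] at hmem
    have hm : LmapPM k Δ (xProd k Δ) ^ m = 0 := by
      rw [← map_pow]; exact hmem
    have hx0 : LmapPM k Δ (xProd k Δ) ≠ 0 := by
      rw [xProd, map_prod]
      refine Finset.prod_ne_zero_iff.mpr fun i _ => ?_
      rw [LmapPM_X]
      exact fun hc => one_ne_zero (MvPolynomial.monomial_eq_zero.mp hc)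
    exact pow_ne_zero m hx0 hm
  have h1 : JsatPM k Δ ≤ LofPM k Δ := by
    rw [JsatPM]
    refine iSup_le fun m => ?_
    intro q hq
    have hq' : q * xProd k Δ ^ m ∈ JofPM k Δ := Ideal.mem_colon_span_singleton.mp hq
    rcases hprime.mem_or_mem (hJle hq') with h | h
    · exact h
    · exact absurd h (hxne m)
  have h2 : LofPM k Δ ≤ JsatPM k Δ := by
    intro p hp
    rw [hL, RingHom.mem_ker] at hp
    have hp' : LmapPM k Δ p = 0 := hp
    have hsp := mem_span_binomials k Δ p.support.card p le_rfl hp'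
    have hle : Submodule.span k (binomSet k Δ) ≤ (JsatPM k Δ).restrictScalars k := by
      rw [Submodule.span_le]
      rintro q ⟨f, g, hfg, rfl⟩
      obtain ⟨N, hN⟩ := key_binomial k Δ (hmapPM Δ f none) f g rfl hfg
      have hcmem : (monomial f 1 - monomial g 1 : MvPolynomial (PMVars Δ) k)
          ∈ Submodule.colon (JofPM k Δ) (Ideal.span {xProd k Δ ^ N}) := by
        refine Ideal.mem_colon_span_singleton.mpr ?_
        rw [mul_comm]
        exact hN
      exact (le_iSup (fun m => Submodule.colon (JofPM k Δ)
        (Ideal.span {xProd k Δ ^ m})) N) hcmem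
    exact hle hsp
  have hJsatL : JsatPM k Δ = LofPM k Δ := le_antisymm h1 h2
  have hLT : LofPM k Δ = toricIdealPM k Δ := by
    rw [hL, toric_eq_kerL]
  refine ⟨hJsatL, hLT, ?_, ?_⟩
  · rw [hJsatL]; exact hprime
  · exact ⟨d + 1, wtv Δ, by rw [hJsatL, hLT]; rfl⟩
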